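/- arXiv:1712.01934 — 3 statements merged into one kernel-verified Lean document; each statement's English description precedes it below -/
import Mathlib

section
/- Let T be a positive self-adjoint trace-class operator on a separable Hilbert space with eigenvalues ζ₁ ≥ ζ₂ ≥ … satisfying ζ_j ≤ β·j^{−b} for all j ≥ 1, where b > 1 and β > 0. Then for every λ ∈ (0,1], the effective dimension N(λ) := Tr((T+λ)⁻¹T) = ∑_j ζ_j/(ζ_j + λ) satisfies N(λ) ≤ C(b,β)·λ^{−1/b} for some constant C(b,β) depending only on b and β. -/
open Finset

/-- Key pointwise inequality (mean value / Bernoulli):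
for `x ≥ 1` and `b > 1`, `(b-1) (x+1)^{-b} ≤ x^{1-b} - (x+1)^{1-b}`. -/
lemma edb_key {b : ℝ} (hb : 1 < b) {x : ℝ} (hx : 1 ≤ x) :
    (b - 1) * (x + 1) ^ (-b) ≤ x ^ (1 - b) - (x + 1) ^ (1 - b) := by
  have hx0 : (0:ℝ) < x := lt_of_lt_of_le one_pos hx
  have hx1 : (0:ℝ) < x + 1 := by linarith
  have hP : (0:ℝ) < x ^ b := Real.rpow_pos_of_pos hx0 b
  have hQ : (0:ℝ) < (x + 1) ^ b := Real.rpow_pos_of_pos hx1 b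
  -- Bernoulli: (1 + 1/x)^b ≥ 1 + b/x
  have hs : (-1:ℝ) ≤ 1 / x := by
    have : (0:ℝ) < 1 / x := by positivity
    linarith
  have hbern : 1 + b * (1 / x) ≤ (1 + 1 / x) ^ b :=
    one_add_mul_self_le_rpow_one_add hs hb.le
  have h1x : (1 : ℝ) + 1 / x = (x + 1) / x := by field_simp
  have hdiv : ((x + 1) / x) ^ b = (x + 1) ^ b / x ^ b :=
    Real.div_rpow hx1.le hx0.le b
  rw [h1x, hdiv] at hbern
  -- clear denominators: x^b * (x + b) ≤ x * (x+1)^b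
  have hmain : x ^ b * (x + b) ≤ x * (x + 1) ^ b := by
    rw [le_div_iff₀ hP] at hbern
    have := mul_le_mul_of_nonneg_left hbern hx0.le
    calc x ^ b * (x + b) = x * ((1 + b * (1 / x)) * x ^ b) := by
          field_simp
      _ ≤ x * (x + 1) ^ b := this
  -- express the rpow's with exponent `1 - b` and `-b`
  have e1 : x ^ (1 - b) = x / x ^ b := by
    rw [Real.rpow_sub hx0, Real.rpow_one]
  have e2 : (x + 1) ^ (1 - b) = (x + 1) / (x + 1) ^ b := by
    rw [Real.rpow_sub hx1, Real.rpow_one]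
  have e3 : (x + 1) ^ (-b) = 1 / (x + 1) ^ b := by
    rw [Real.rpow_neg hx1.le, one_div]
  rw [e1, e2, e3]
  rw [div_sub_div _ _ (ne_of_gt hP) (ne_of_gt hQ), mul_one_div,
    div_le_div_iff₀ hQ (by positivity)]
  nlinarith [mul_le_mul_of_nonneg_left hmain hQ.le]

/-- Tail bound: `∑_{j≥0} (j + N + 1)^{-b} ≤ N^{1-b}/(b-1)` for `N ≥ 1`. -/
lemma edb_tail {b : ℝ} (hb : 1 < b) {N : ℕ} (hN : 1 ≤ N) :
    (∑' j : ℕ, ((j : ℝ) + N + 1) ^ (-b)) ≤ (N : ℝ) ^ (1 - b) / (b - 1) := by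
  have hb1 : (0:ℝ) < b - 1 := by linarith
  have hN1 : (1:ℝ) ≤ (N : ℝ) := by exact_mod_cast hN
  apply Real.tsum_le_of_sum_range_le
  · intro n; positivity
  · intro n
    have key : ∀ n : ℕ, (b - 1) * ∑ j ∈ range n, ((j : ℝ) + N + 1) ^ (-b)
        ≤ (N : ℝ) ^ (1 - b) - ((N : ℝ) + n) ^ (1 - b) := by
      intro n
      induction n with
      | zero => simp
      | succ n ih =>
        rw [Finset.sum_range_succ, mul_add]
        have hx : (1:ℝ) ≤ (N : ℝ) + n := by
          have : (0:ℝ) ≤ (n:ℝ) := Nat.cast_nonneg n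
          linarith
        have hkey := edb_key hb hx
        have heq : ((n : ℝ) + N + 1) = ((N:ℝ) + n) + 1 := by ring
        rw [heq]
        have hcast : ((N : ℝ) + (n + 1 : ℕ)) = ((N:ℝ) + n + 1) := by push_cast; ring
        rw [hcast]
        linarith [ih, hkey]
    have h0 : (0:ℝ) ≤ ((N : ℝ) + n) ^ (1 - b) := by positivity
    rw [le_div_iff₀ hb1]
    linarith [key n]

set_option maxHeartbeats 1000000 in
/-- Effective dimension bound: if the (nonincreasing, nonnegative) eigenvalues
`ζ` of a positive trace-class operator satisfy `ζ_j ≤ β j^{-b}` (here indexed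
from `0`, so `ζ j ≤ β (j+1)^{-b}`), then
`N(λ) = ∑_j ζ_j/(ζ_j+λ) ≤ C(b,β) λ^{-1/b}` for all `λ ∈ (0,1]`. -/
theorem effective_dimension_bound (b β : ℝ) (hb : 1 < b) (hβ : 0 < β) :
    ∃ C : ℝ, 0 < C ∧ ∀ ζ : ℕ → ℝ, (∀ j, 0 ≤ ζ j) → Antitone ζ →
      (∀ j : ℕ, ζ j ≤ β * ((j : ℝ) + 1) ^ (-b)) →
      ∀ lam : ℝ, 0 < lam → lam ≤ 1 →
        (∑' j : ℕ, ζ j / (ζ j + lam)) ≤ C * lam ^ (-(1 / b)) := by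
  have hb0 : (0:ℝ) < b := by linarith
  have hb1 : (0:ℝ) < b - 1 := by linarith
  refine ⟨(β ^ (1 / b) + 1) * (b / (b - 1)), by positivity, ?_⟩
  intro ζ hζ0 _hζanti hζb lam hlam hlam1
  -- summability of the auxiliary series
  have hsum0 : Summable (fun n : ℕ => (n : ℝ) ^ (-b)) :=
    Real.summable_nat_rpow.mpr (by linarith)
  have hsum1 : Summable (fun j : ℕ => ((j : ℝ) + 1) ^ (-b)) := by
    have := (summable_nat_add_iff (f := fun n : ℕ => (n : ℝ) ^ (-b)) 1).mpr hsum0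
    refine this.congr fun j => ?_
    congr 1
    push_cast
    ring
  -- each term bounds
  have hterm_le_one : ∀ j, ζ j / (ζ j + lam) ≤ 1 := by
    intro j
    rw [div_le_one (by have := hζ0 j; linarith)]
    linarith
  have hterm_nonneg : ∀ j, 0 ≤ ζ j / (ζ j + lam) := by
    intro j
    have := hζ0 j
    positivity
  have hterm_le : ∀ j : ℕ, ζ j / (ζ j + lam) ≤ β / lam * ((j : ℝ) + 1) ^ (-b) := by
    intro j
    have h1 : ζ j / (ζ j + lam) ≤ ζ j / lam :=
      div_le_div_of_nonneg_left (hζ0 j) hlam (by linarith [hζ0 j])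
    refine h1.trans ?_
    rw [div_mul_eq_mul_div, div_le_div_iff_of_pos_right hlam]
    exact hζb j
  have hf : Summable (fun j : ℕ => ζ j / (ζ j + lam)) :=
    Summable.of_nonneg_of_le hterm_nonneg hterm_le ((hsum1.mul_left (β / lam)))
  -- the cut point
  set t : ℝ := (β / lam) ^ (1 / b) with ht
  have ht0 : 0 < t := Real.rpow_pos_of_pos (by positivity) _
  set N : ℕ := ⌈t⌉₊ with hNdef
  have hN1 : 1 ≤ N := Nat.one_le_iff_ne_zero.mpr (by
    intro h
    have := Nat.ceil_eq_zero.mp h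
    linarith)
  have hNt : t ≤ (N : ℝ) := Nat.le_ceil t
  have hNpos : (0:ℝ) < N := lt_of_lt_of_le ht0 hNt
  -- N^b ≥ β/lam
  have htb : t ^ b = β / lam := by
    rw [ht, ← Real.rpow_mul (by positivity : (0:ℝ) ≤ β / lam),
      one_div_mul_cancel hb0.ne', Real.rpow_one]
  have hNb : β / lam ≤ (N : ℝ) ^ b := by
    rw [← htb]
    exact Real.rpow_le_rpow ht0.le hNt hb0.le
  -- split the sum
  have hsplit := Summable.sum_add_tsum_nat_add (f := fun j : ℕ => ζ j / (ζ j + lam)) N hf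
  rw [← hsplit]
  -- head bound
  have hhead : ∑ j ∈ Finset.range N, ζ j / (ζ j + lam) ≤ (N : ℝ) := by
    calc ∑ j ∈ Finset.range N, ζ j / (ζ j + lam) ≤ ∑ _j ∈ Finset.range N, (1:ℝ) :=
          Finset.sum_le_sum fun j _ => hterm_le_one j
      _ = (N : ℝ) := by simp
  -- tail bound
  have htail0 : Summable (fun j : ℕ => ((j : ℝ) + N + 1) ^ (-b)) := by
    have := (summable_nat_add_iff (f := fun j : ℕ => ((j : ℝ) + 1) ^ (-b)) N).mpr hsum1
    refine this.congr fun j => ?_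
    congr 1
    push_cast
    ring
  have htail : (∑' j : ℕ, ζ (j + N) / (ζ (j + N) + lam)) ≤ (β / lam) * ((N : ℝ) ^ (1 - b) / (b - 1)) := by
    have h1 : (∑' j : ℕ, ζ (j + N) / (ζ (j + N) + lam))
        ≤ ∑' j : ℕ, (β / lam) * ((j : ℝ) + N + 1) ^ (-b) := by
      refine Summable.tsum_le_tsum (fun j => ?_) ((summable_nat_add_iff N).mpr hf) (htail0.mul_left _)
      have h := hterm_le (j + N)
      have hc : (((j + N : ℕ) : ℝ) + 1) = ((j : ℝ) + N + 1) := by push_cast; ring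
      rw [hc] at h
      exact h
    refine h1.trans ?_
    rw [tsum_mul_left]
    exact mul_le_mul_of_nonneg_left (edb_tail hb hN1) (by positivity)
  -- (β/lam) * N^{1-b} ≤ N
  have hNcrit : (β / lam) * (N : ℝ) ^ (1 - b) ≤ (N : ℝ) := by
    have e : (N : ℝ) ^ (1 - b) = (N : ℝ) * ((N : ℝ) ^ b)⁻¹ := by
      rw [Real.rpow_sub hNpos, Real.rpow_one, div_eq_mul_inv]
    rw [e]
    have h2 : (β / lam) * ((N : ℝ) ^ b)⁻¹ ≤ 1 := by
      rw [← div_eq_mul_inv, div_le_one (Real.rpow_pos_of_pos hNpos b)]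
      exact hNb
    calc (β / lam) * ((N : ℝ) * ((N : ℝ) ^ b)⁻¹)
        = ((β / lam) * ((N : ℝ) ^ b)⁻¹) * N := by ring
      _ ≤ 1 * N := mul_le_mul_of_nonneg_right h2 hNpos.le
      _ = N := one_mul _
  -- N bound
  have hlaminv : (1:ℝ) ≤ lam ^ (-(1 / b)) := by
    rw [Real.rpow_neg hlam.le]
    have hple : lam ^ (1 / b) ≤ 1 := Real.rpow_le_one hlam.le hlam1 (by positivity)
    have hp : 0 < lam ^ (1 / b) := Real.rpow_pos_of_pos hlam _
    exact (one_le_inv₀ hp).mpr hple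
  have hNle : (N : ℝ) ≤ (β ^ (1 / b) + 1) * lam ^ (-(1 / b)) := by
    have hceil : (N : ℝ) ≤ t + 1 := by
      have := Nat.ceil_lt_add_one ht0.le
      exact le_of_lt this
    have htval : t = β ^ (1 / b) * lam ^ (-(1 / b)) := by
      rw [ht, Real.div_rpow hβ.le hlam.le, Real.rpow_neg hlam.le, div_eq_mul_inv]
    calc (N : ℝ) ≤ t + 1 := hceil
      _ = β ^ (1 / b) * lam ^ (-(1 / b)) + 1 := by rw [htval]
      _ ≤ β ^ (1 / b) * lam ^ (-(1 / b)) + 1 * lam ^ (-(1 / b)) := by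
          nlinarith [hlaminv]
      _ = (β ^ (1 / b) + 1) * lam ^ (-(1 / b)) := by ring
  calc (∑ j ∈ Finset.range N, ζ j / (ζ j + lam)) + ∑' j : ℕ, ζ (j + N) / (ζ (j + N) + lam)
      ≤ (N : ℝ) + (β / lam) * ((N : ℝ) ^ (1 - b) / (b - 1)) := add_le_add hhead htail
    _ ≤ (N : ℝ) + (N : ℝ) / (b - 1) := by
        rw [mul_div_assoc'] at *
        gcongr
    _ = (N : ℝ) * (b / (b - 1)) := by field_simp; ring
    _ ≤ ((β ^ (1 / b) + 1) * lam ^ (-(1 / b))) * (b / (b - 1)) := by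
        apply mul_le_mul_of_nonneg_right hNle (by positivity)
    _ = (β ^ (1 / b) + 1) * (b / (b - 1)) * lam ^ (-(1 / b)) := by ring
end

section
/- Let X ~ random vector in a Banach space with ‖X‖ ≤ c almost surely and E[‖X‖²] ≤ σ². Suppose the norm satisfies: for all nonzero s and all v, the second directional derivative of the norm satisfies |δ_{v,v}(‖s‖)| ≤ A₂‖v‖²/‖s‖ and first directional derivatives are bounded by A₁‖v‖ (A₁ ≥ 1). Then for λ ≥ 0, E[cosh(λ‖X‖)] ≤ 1 + (σ²/c²)·B·π(λc), where B = A₁² + A₂ and π(x) = e^x − x − 1. -/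
open MeasureTheory

-- sinh u ≤ u * cosh u for u ≥ 0
lemma aux_sinh_le (u : ℝ) (hu : 0 ≤ u) : Real.sinh u ≤ u * Real.cosh u := by
  have hmono : Monotone (fun w : ℝ => w * Real.cosh w - Real.sinh w) := by
    apply monotone_of_deriv_nonneg
    · exact (differentiable_id.mul Real.differentiable_cosh).sub Real.differentiable_sinh
    · intro w
      have h : HasDerivAt (fun w : ℝ => w * Real.cosh w - Real.sinh w)
          (1 * Real.cosh w + w * Real.sinh w - Real.cosh w) w :=
        ((hasDerivAt_id w).mul (Real.hasDerivAt_cosh w)).sub (Real.hasDerivAt_sinh w)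
      rw [h.deriv]
      rcases le_total 0 w with h0 | h0
      · nlinarith [Real.sinh_nonneg_iff.2 h0]
      · have hs : Real.sinh w ≤ 0 := by
          have := Real.sinh_le_sinh.2 h0; simpa using this
        nlinarith
  have := hmono hu
  simp only [Real.sinh_zero, Real.cosh_zero, mul_one, zero_mul, sub_zero] at this
  linarith

-- v * sinh u ≤ u * sinh v for 0 ≤ u ≤ v
lemma aux_sinh_slope {u v : ℝ} (hu : 0 ≤ u) (huv : u ≤ v) :
    v * Real.sinh u ≤ u * Real.sinh v := by
  rcases hu.eq_or_lt with h | h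
  · simp [← h]
  · have hv : 0 < v := lt_of_lt_of_le h huv
    have hmono : MonotoneOn (fun w : ℝ => Real.sinh w / w) (Set.Ioi 0) := by
      apply monotoneOn_of_deriv_nonneg (convex_Ioi 0)
      · exact Real.continuous_sinh.continuousOn.div continuousOn_id
          (fun w hw => ne_of_gt hw)
      · rw [interior_Ioi]
        intro w hw
        exact (((Real.differentiable_sinh w).div (differentiable_id w) (ne_of_gt hw))).differentiableWithinAt
      · rw [interior_Ioi]
        intro w hw
        have hw0 : (w : ℝ) ≠ 0 := ne_of_gt hw
        have hd : HasDerivAt (fun w : ℝ => Real.sinh w / w)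
            ((Real.cosh w * w - Real.sinh w * 1) / w ^ 2) w :=
          (Real.hasDerivAt_sinh w).div (hasDerivAt_id w) hw0
        rw [hd.deriv]
        apply div_nonneg _ (sq_nonneg w)
        have := aux_sinh_le w (le_of_lt hw)
        nlinarith
    have := hmono (Set.mem_Ioi.2 h) (Set.mem_Ioi.2 hv) huv
    rw [div_le_div_iff₀ h hv] at this
    linarith

lemma aux_cosh_sub_one (y : ℝ) : Real.cosh y - 1 = 2 * Real.sinh (y / 2) ^ 2 := by
  have h := Real.cosh_two_mul (y / 2)
  have h2 := Real.cosh_sq (y / 2)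
  have : 2 * (y / 2) = y := by ring
  rw [this] at h
  nlinarith

lemma aux_key {y t : ℝ} (hy : 0 ≤ y) (hyt : y ≤ t) :
    t ^ 2 * (Real.cosh y - 1) ≤ y ^ 2 * (Real.cosh t - 1) := by
  have hu : 0 ≤ y / 2 := by linarith
  have huv : y / 2 ≤ t / 2 := by linarith
  have h := aux_sinh_slope hu huv
  have h1 : 0 ≤ Real.sinh (y / 2) := Real.sinh_nonneg_iff.2 hu
  have h2 : 0 ≤ t / 2 := le_trans hu huv
  have hsq : (t / 2 * Real.sinh (y / 2)) ^ 2 ≤ (y / 2 * Real.sinh (t / 2)) ^ 2 := by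
    apply sq_le_sq' _ h
    nlinarith [mul_nonneg h2 h1]
  rw [aux_cosh_sub_one y, aux_cosh_sub_one t]
  nlinarith [hsq]

lemma aux_pointwise {c lam x : ℝ} (hc : 0 < c) (hlam : 0 ≤ lam) (hx0 : 0 ≤ x)
    (hxc : x ≤ c) :
    Real.cosh (lam * x) ≤ 1 + x ^ 2 / c ^ 2 * (Real.exp (lam * c) - lam * c - 1) := by
  have hpi : 0 ≤ Real.exp (lam * c) - lam * c - 1 := by
    nlinarith [Real.add_one_le_exp (lam * c)]
  rcases hlam.eq_or_lt with h | h
  · rw [← h]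
    simp [Real.exp_zero]
  · have hy : 0 ≤ lam * x := mul_nonneg h.le hx0
    have hyt : lam * x ≤ lam * c := mul_le_mul_of_nonneg_left hxc h.le
    have hkey := aux_key hy hyt
    have hch : Real.cosh (lam * c) - 1 ≤ Real.exp (lam * c) - lam * c - 1 := by
      have h1 : lam * c ≤ Real.sinh (lam * c) :=
        Real.self_le_sinh_iff.2 (mul_nonneg h.le hc.le)
      have h2 := Real.cosh_add_sinh (lam * c)
      linarith
    have hc1 : 1 ≤ Real.cosh (lam * x) := Real.one_le_cosh _
    have hstep : c ^ 2 * (Real.cosh (lam * x) - 1) ≤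
        x ^ 2 * (Real.exp (lam * c) - lam * c - 1) := by
      have hl2 : 0 < lam ^ 2 := by positivity
      nlinarith [sq_nonneg x, sq_nonneg (lam * x)]
    rw [div_mul_eq_mul_div, ← sub_le_iff_le_add',
      le_div_iff₀ (by positivity : (0:ℝ) < c ^ 2)]
    linarith [hstep]

theorem expectation_cosh_norm_le {Ω : Type*} [MeasurableSpace Ω]
    (μ : Measure Ω) [IsProbabilityMeasure μ]
    {B : Type*} [NormedAddCommGroup B] [NormedSpace ℝ B]
    (X : Ω → B) (hX : AEStronglyMeasurable X μ)
    (c σ A₁ A₂ lam : ℝ) (hc : 0 < c) (hA₁ : 1 ≤ A₁) (hA₂ : 0 < A₂) (hlam : 0 ≤ lam)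
    (hbd : ∀ᵐ ω ∂μ, ‖X ω‖ ≤ c)
    (hvar : ∫ ω, ‖X ω‖ ^ 2 ∂μ ≤ σ ^ 2)
    (hD1 : ∀ s v : B, s ≠ 0 → |deriv (fun t : ℝ => ‖s + t • v‖) 0| ≤ A₁ * ‖v‖)
    (hD2 : ∀ s v : B, s ≠ 0 →
      |deriv (deriv (fun t : ℝ => ‖s + t • v‖)) 0| ≤ A₂ * ‖v‖ ^ 2 / ‖s‖) :
    ∫ ω, Real.cosh (lam * ‖X ω‖) ∂μ ≤
      1 + σ ^ 2 / c ^ 2 * (A₁ ^ 2 + A₂) * (Real.exp (lam * c) - lam * c - 1) := by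
  set π : ℝ := Real.exp (lam * c) - lam * c - 1 with hπ
  have hpi : 0 ≤ π := by
    have := Real.add_one_le_exp (lam * c); simp only [hπ]; linarith
  have hB1 : 1 ≤ A₁ ^ 2 + A₂ := by nlinarith
  set K : ℝ := (A₁ ^ 2 + A₂) * π / c ^ 2 with hK
  have hK0 : 0 ≤ K := by positivity
  -- measurability
  have hmn : AEStronglyMeasurable (fun ω => ‖X ω‖) μ := hX.norm
  have hm1 : AEStronglyMeasurable (fun ω => Real.cosh (lam * ‖X ω‖)) μ :=
    Real.continuous_cosh.comp_aestronglyMeasurable (hmn.const_mul lam)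
  have hm2 : AEStronglyMeasurable (fun ω => ‖X ω‖ ^ 2) μ :=
    (continuous_pow 2).comp_aestronglyMeasurable hmn
  -- integrability
  have hint1 : Integrable (fun ω => Real.cosh (lam * ‖X ω‖)) μ := by
    apply Integrable.mono' (integrable_const (Real.cosh (lam * c))) hm1
    filter_upwards [hbd] with ω hω
    rw [Real.norm_eq_abs, abs_of_pos (Real.cosh_pos _)]
    rw [Real.cosh_le_cosh]
    have h1 : 0 ≤ lam * ‖X ω‖ := mul_nonneg hlam (norm_nonneg _)
    have h2 : 0 ≤ lam * c := mul_nonneg hlam hc.le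
    rw [abs_of_nonneg h1, abs_of_nonneg h2]
    exact mul_le_mul_of_nonneg_left hω hlam
  have hint2 : Integrable (fun ω => ‖X ω‖ ^ 2) μ := by
    apply Integrable.mono' (integrable_const (c ^ 2)) hm2
    filter_upwards [hbd] with ω hω
    rw [Real.norm_eq_abs, abs_of_nonneg (sq_nonneg _)]
    exact pow_le_pow_left₀ (norm_nonneg _) hω 2
  have hint3 : Integrable (fun ω => 1 + ‖X ω‖ ^ 2 * K) μ :=
    (integrable_const 1).add (hint2.mul_const K)
  -- pointwise bound
  have hae : ∀ᵐ ω ∂μ, Real.cosh (lam * ‖X ω‖) ≤ 1 + ‖X ω‖ ^ 2 * K := by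
    filter_upwards [hbd] with ω hω
    have h1 := aux_pointwise hc hlam (norm_nonneg (X ω)) hω
    have h2 : ‖X ω‖ ^ 2 / c ^ 2 * π ≤ ‖X ω‖ ^ 2 * K := by
      rw [hK]
      rw [div_mul_eq_mul_div, mul_div_assoc, mul_div_assoc]
      apply mul_le_mul_of_nonneg_left _ (sq_nonneg _)
      have hd : 0 ≤ π / c ^ 2 := by positivity
      nlinarith
    calc Real.cosh (lam * ‖X ω‖) ≤ 1 + ‖X ω‖ ^ 2 / c ^ 2 * π := h1
    _ ≤ 1 + ‖X ω‖ ^ 2 * K := by linarith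
  have hmono := integral_mono_ae hint1 hint3 hae
  have hcomp : ∫ ω, (1 + ‖X ω‖ ^ 2 * K) ∂μ = 1 + (∫ ω, ‖X ω‖ ^ 2 ∂μ) * K := by
    rw [integral_add (integrable_const 1) (hint2.mul_const K), integral_const,
      integral_mul_const]
    simp
  rw [hcomp] at hmono
  have hfinal : (∫ ω, ‖X ω‖ ^ 2 ∂μ) * K ≤ σ ^ 2 / c ^ 2 * (A₁ ^ 2 + A₂) * π := by
    have : σ ^ 2 / c ^ 2 * (A₁ ^ 2 + A₂) * π = σ ^ 2 * K := by
      rw [hK]; field_simp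
    rw [this]
    exact mul_le_mul_of_nonneg_right hvar hK0
  linarith
end

section
/- Let n ≥ 1 and let θ > 0, γ > 0, χ > 0, c > 0, C₁ > 0 be constants. Define ℓ_g = ⌊ nθ / (2·(1 ∨ log(nθχC₁/c))^{1/γ}) ⌋ and suppose ℓ_g ≥ 1. Then ℓ_g · C₁ · χ · exp(−(θ·(n/(2ℓ_g)))^γ) ≤ c. -/
theorem geometric_mixing_effective_sample_size (n : ℕ) (hn : 1 ≤ n)
    (θ γ χ c C₁ : ℝ) (hθ : 0 < θ) (hγ : 0 < γ) (hχ : 0 < χ) (hc : 0 < c)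
    (hC₁ : 0 < C₁)
    (ℓg : ℕ)
    (hℓg : ℓg = ⌊(n : ℝ) * θ /
      (2 * (max 1 (Real.log ((n : ℝ) * θ * χ * C₁ / c))) ^ (1 / γ))⌋₊)
    (hℓg1 : 1 ≤ ℓg) :
    (ℓg : ℝ) * C₁ * χ * Real.exp (-(θ * ((n : ℝ) / (2 * (ℓg : ℝ)))) ^ γ) ≤ c := by
  have hn' : (0:ℝ) < n := by exact_mod_cast hn
  set A : ℝ := (n : ℝ) * θ * χ * C₁ / c with hA
  have hA0 : 0 < A := by positivity
  set L : ℝ := max 1 (Real.log A) with hL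
  have hL1 : (1:ℝ) ≤ L := le_max_left _ _
  have hL0 : (0:ℝ) < L := lt_of_lt_of_le one_pos hL1
  have hLγ1 : (1:ℝ) ≤ L ^ (1/γ) := by
    calc (1:ℝ) = (1:ℝ) ^ (1/γ) := (Real.one_rpow _).symm
    _ ≤ L ^ (1/γ) := Real.rpow_le_rpow zero_le_one hL1 (by positivity)
  have hLγ0 : (0:ℝ) < L ^ (1/γ) := lt_of_lt_of_le one_pos hLγ1
  have hℓg0 : (0:ℝ) < ℓg := by exact_mod_cast hℓg1
  have hfloor : (ℓg : ℝ) ≤ (n : ℝ) * θ / (2 * L ^ (1/γ)) := by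
    rw [hℓg]
    exact Nat.floor_le (by positivity)
  have hstep : L ^ (1/γ) ≤ θ * ((n : ℝ) / (2 * ℓg)) := by
    rw [le_div_iff₀ (by positivity)] at hfloor
    rw [mul_div_assoc', le_div_iff₀ (by positivity)]
    nlinarith [hfloor]
  have hpow : L ≤ (θ * ((n : ℝ) / (2 * ℓg))) ^ γ := by
    have h1 : (L ^ (1/γ)) ^ γ ≤ (θ * ((n : ℝ) / (2 * ℓg))) ^ γ :=
      Real.rpow_le_rpow (le_of_lt hLγ0) hstep (le_of_lt hγ)
    have h2 : (L ^ (1/γ)) ^ γ = L := by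
      rw [← Real.rpow_mul hL0.le, one_div_mul_cancel (ne_of_gt hγ), Real.rpow_one]
    rwa [h2] at h1
  have hexp : Real.exp (-(θ * ((n : ℝ) / (2 * ℓg))) ^ γ) ≤ A⁻¹ := by
    have hlogA : Real.log A ≤ L := le_max_right _ _
    calc Real.exp (-(θ * ((n : ℝ) / (2 * ℓg))) ^ γ)
        ≤ Real.exp (-Real.log A) := Real.exp_le_exp.mpr (by linarith)
      _ = A⁻¹ := by rw [Real.exp_neg, Real.exp_log hA0]
  have hℓhalf : (ℓg : ℝ) ≤ (n : ℝ) * θ / 2 := by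
    calc (ℓg : ℝ) ≤ (n : ℝ) * θ / (2 * L ^ (1/γ)) := hfloor
    _ ≤ (n : ℝ) * θ / 2 := by
        apply div_le_div_of_nonneg_left (by positivity) (by norm_num)
        nlinarith
  have hexp0 : 0 < Real.exp (-(θ * ((n : ℝ) / (2 * ℓg))) ^ γ) := Real.exp_pos _
  have key : (ℓg : ℝ) * C₁ * χ * Real.exp (-(θ * ((n : ℝ) / (2 * ℓg))) ^ γ)
      ≤ ((n : ℝ) * θ / 2) * C₁ * χ * A⁻¹ := by
    exact mul_le_mul (mul_le_mul_of_nonneg_right (mul_le_mul_of_nonneg_right hℓhalf hC₁.le) hχ.le) hexp hexp0.le (by positivity)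
  have hAinv : A⁻¹ = c / ((n : ℝ) * θ * χ * C₁) := by
    rw [hA]; field_simp
  calc (ℓg : ℝ) * C₁ * χ * Real.exp (-(θ * ((n : ℝ) / (2 * ℓg))) ^ γ)
      ≤ ((n : ℝ) * θ / 2) * C₁ * χ * A⁻¹ := key
    _ = c / 2 := by rw [hAinv]; field_simp
    _ ≤ c := by linarith
end
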